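/- arXiv:1509.08786 — 2 statements merged into one kernel-verified Lean document; each statement's English description precedes it below -/
import Mathlib

section
/- Let H be a Hilbert space, K a closed subspace, S the orthogonal projection onto K, C a bounded projection of H onto K, and A = C* − C. If I − A is invertible with bounded inverse, then S = C ∘ (I − A)⁻¹. -/
open ContinuousLinearMap

theorem stmt5 {H : Type*} [NormedAddCommGroup H] [InnerProductSpace ℂ H] [CompleteSpace H]
    (K : Submodule ℂ H) [K.HasOrthogonalProjection]
    (C : H →L[ℂ] H) (hidem : C ∘L C = C)
    (hrange : LinearMap.range (C : H →ₗ[ℂ] H) = K)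
    (B : H →L[ℂ] H)
    (hB₁ : (1 - (ContinuousLinearMap.adjoint C - C)) ∘L B = 1)
    (hB₂ : B ∘L (1 - (ContinuousLinearMap.adjoint C - C)) = 1) :
    K.subtypeL ∘L K.orthogonalProjectionOnto = C ∘L B := by
  set S : H →L[ℂ] H := K.subtypeL ∘L K.orthogonalProjectionOnto with hS
  have hSC : S * C = C := by
    ext x
    have hmem : C x ∈ K := by rw [← hrange]; exact ⟨x, rfl⟩
    exact Submodule.starProjection_eq_self_iff.mpr hmem
  have hCS : C * S = S := by
    ext x
    have hmem : S x ∈ K := (K.orthogonalProjectionOnto x).2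
    rw [← hrange] at hmem
    obtain ⟨y, hy⟩ := hmem
    have := congrArg (fun T => T y) hidem
    simp only [comp_apply, coe_comp'] at this
    rw [show (C * S) x = C (S x) from rfl, ← hy]
    exact this
  have hsa : ContinuousLinearMap.adjoint S = S :=
    (isSelfAdjoint_iff_isSymmetric.2 (K.starProjection_isSymmetric))
  have hSCstar : S * ContinuousLinearMap.adjoint C = S := by
    rw [← hsa]
    simp only [← star_eq_adjoint]
    rw [← star_mul, hCS]
  have key : S * (1 - (ContinuousLinearMap.adjoint C - C)) = C := by
    rw [mul_sub, mul_sub, mul_one, hSC, hSCstar, sub_sub_cancel]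
  have hB₁' : (1 - (ContinuousLinearMap.adjoint C - C)) * B = 1 := hB₁
  show S = C * B
  calc S = S * ((1 - (ContinuousLinearMap.adjoint C - C)) * B) := by rw [hB₁', mul_one]
    _ = (S * (1 - (ContinuousLinearMap.adjoint C - C))) * B := by rw [mul_assoc]
    _ = C * B := by rw [key]
end

section
/- Let ρ : ℂⁿ → ℝ be C² and strictly plurisubharmonic near a point w (i.e., the complex Hessian Σ ∂²ρ/∂ζᵢ∂ζ̄ⱼ(w) vᵢ v̄ⱼ ≥ c|v|² for all v ∈ ℂⁿ). Define η_j(w,z) = ∂ρ/∂ζⱼ(w) − ½ Σᵢ ∂²ρ/∂ζᵢ∂ζⱼ(w)(wᵢ − zᵢ). Then by second-order Taylor expansion, 2 Re⟨η(w,z), w−z⟩ = ρ(w) − ρ(z) + Σᵢⱼ ∂²ρ/∂ζᵢ∂ζ̄ⱼ(w)(wᵢ−zᵢ)(w̄ⱼ−z̄ⱼ) + o(|w−z|²). Consequently, if ρ(w) = 0 and ρ(z) ≤ 0, then Re⟨η(w,z), w−z⟩ ≥ (c/4)|w−z|² for |w−z| sufficiently small. -/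
open Complex Asymptotics

/-- The Wirtinger derivative `∂g/∂ζⱼ` of a complex-valued function on `ℂⁿ`,
computed from the real Fréchet derivative:
`∂g/∂ζⱼ(w) = ½ (Dg(w)(eⱼ) - i · Dg(w)(i eⱼ))`. -/
noncomputable def wirt {n : ℕ} (g : EuclideanSpace ℂ (Fin n) → ℂ) (j : Fin n)
    (w : EuclideanSpace ℂ (Fin n)) : ℂ :=
  (1 / 2 : ℂ) * (fderiv ℝ g w (EuclideanSpace.single j 1) -
    Complex.I * fderiv ℝ g w (Complex.I • EuclideanSpace.single j 1))

/-- The conjugate Wirtinger derivative `∂g/∂ζ̄ⱼ`: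
`∂g/∂ζ̄ⱼ(w) = ½ (Dg(w)(eⱼ) + i · Dg(w)(i eⱼ))`. -/
noncomputable def wirtBar {n : ℕ} (g : EuclideanSpace ℂ (Fin n) → ℂ) (j : Fin n)
    (w : EuclideanSpace ℂ (Fin n)) : ℂ :=
  (1 / 2 : ℂ) * (fderiv ℝ g w (EuclideanSpace.single j 1) +
    Complex.I * fderiv ℝ g w (Complex.I • EuclideanSpace.single j 1))

/-! ### Auxiliary material -/

namespace Stmt15Aux

noncomputable def e {n : ℕ} (j : Fin n) : EuclideanSpace ℂ (Fin n) :=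
  EuclideanSpace.single j (1:ℂ)

variable {n : ℕ}

lemma single_decomp (j : Fin n) (a : ℂ) : EuclideanSpace.single j a =
    a.re • e j + a.im • (Complex.I • e j) := by
  ext k
  by_cases h : k = j <;> simp [e, EuclideanSpace.single_apply, h, Complex.real_smul]

lemma eq_sum (v : EuclideanSpace ℂ (Fin n)) : v = ∑ j, EuclideanSpace.single j (v j) := by
  ext k
  rw [show (∑ j, EuclideanSpace.single j (v j)) k = ∑ j, EuclideanSpace.single j (v j) k from
    by rw [WithLp.ofLp_sum]; exact Finset.sum_apply k Finset.univ _]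
  simp [EuclideanSpace.single_apply]

lemma apply_decomp (T : EuclideanSpace ℂ (Fin n) →L[ℝ] ℝ) (h : EuclideanSpace ℂ (Fin n)) :
    T h = ∑ j, ((h j).re * T (e j) + (h j).im * T (Complex.I • e j)) := by
  conv_lhs => rw [eq_sum h]
  rw [map_sum]
  exact Finset.sum_congr rfl fun j _ => by rw [single_decomp]; simp

lemma clin (a b : ℝ) (p : ℂ) :
    2 * ((1/2:ℂ) * ((a:ℂ) - Complex.I * (b:ℂ)) * p).re = p.re * a + p.im * b := by
  simp [Complex.mul_re, Complex.mul_im]; ring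

lemma cquad (a b c d : ℝ) (p q : ℂ) :
    ((1/2:ℂ) * ((1/2:ℂ) * ((a:ℂ) - Complex.I * (b:ℂ)) -
        Complex.I * ((1/2:ℂ) * ((c:ℂ) - Complex.I * (d:ℂ)))) * p * q).re
      + ((1/2:ℂ) * ((1/2:ℂ) * ((a:ℂ) + Complex.I * (b:ℂ)) -
        Complex.I * ((1/2:ℂ) * ((c:ℂ) + Complex.I * (d:ℂ)))) * p * (starRingEnd ℂ) q).re
    = (1/2) * (p.re * q.re * a + p.re * q.im * b + p.im * q.re * c + p.im * q.im * d) := by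
  simp [Complex.mul_re, Complex.mul_im]; ring

lemma lin_id (T : EuclideanSpace ℂ (Fin n) →L[ℝ] ℝ) (h : EuclideanSpace ℂ (Fin n)) :
    2 * (∑ j, (1/2:ℂ) * ((T (e j):ℂ) - Complex.I * (T (Complex.I • e j):ℂ)) * h j).re = T h := by
  rw [Complex.re_sum, Finset.mul_sum, apply_decomp T h]
  exact Finset.sum_congr rfl fun j _ => clin _ _ _

lemma quad_id (B : EuclideanSpace ℂ (Fin n) →L[ℝ] EuclideanSpace ℂ (Fin n) →L[ℝ] ℝ)
    (h : EuclideanSpace ℂ (Fin n)) :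
    (∑ j, ∑ i, ((1/2:ℂ) * ((1/2:ℂ) * ((B (e i) (e j):ℂ)
          - Complex.I * (B (e i) (Complex.I • e j) : ℂ))
        - Complex.I * ((1/2:ℂ) * ((B (Complex.I • e i) (e j) : ℂ)
          - Complex.I * (B (Complex.I • e i) (Complex.I • e j) : ℂ)))) * h i * h j)).re
    + (∑ i, ∑ j, ((1/2:ℂ) * ((1/2:ℂ) * ((B (e i) (e j):ℂ)
          + Complex.I * (B (e i) (Complex.I • e j) : ℂ))
        - Complex.I * ((1/2:ℂ) * ((B (Complex.I • e i) (e j) : ℂ)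
          + Complex.I * (B (Complex.I • e i) (Complex.I • e j) : ℂ)))) * h i
            * (starRingEnd ℂ) (h j))).re
    = (1/2) * B h h := by
  have exp : B h h = ∑ j, ∑ i, ((h i).re * (h j).re * B (e i) (e j)
      + (h i).im * (h j).re * B (Complex.I • e i) (e j)
      + (h i).re * (h j).im * B (e i) (Complex.I • e j)
      + (h i).im * (h j).im * B (Complex.I • e i) (Complex.I • e j)) := by
    calc B h h = ∑ j, ((h j).re * B h (e j) + (h j).im * B h (Complex.I • e j)) :=
          apply_decomp (B h) h
      _ = ∑ j, ((h j).re * (∑ i, ((h i).re * B (e i) (e j)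
              + (h i).im * B (Complex.I • e i) (e j)))
            + (h j).im * (∑ i, ((h i).re * B (e i) (Complex.I • e j)
              + (h i).im * B (Complex.I • e i) (Complex.I • e j)))) := by
          refine Finset.sum_congr rfl fun j _ => ?_
          rw [show B h (e j) = B.flip (e j) h from rfl, apply_decomp (B.flip (e j)) h,
            show B h (Complex.I • e j) = B.flip (Complex.I • e j) h from rfl,
            apply_decomp (B.flip (Complex.I • e j)) h]
          simp [ContinuousLinearMap.flip_apply]
      _ = _ := by
          refine Finset.sum_congr rfl fun j _ => ?_
          rw [Finset.mul_sum, Finset.mul_sum, ← Finset.sum_add_distrib]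
          exact Finset.sum_congr rfl fun i _ => by ring
  have swap : (∑ i, ∑ j, ((1/2:ℂ) * ((1/2:ℂ) * ((B (e i) (e j):ℂ)
          + Complex.I * (B (e i) (Complex.I • e j) : ℂ))
        - Complex.I * ((1/2:ℂ) * ((B (Complex.I • e i) (e j) : ℂ)
          + Complex.I * (B (Complex.I • e i) (Complex.I • e j) : ℂ)))) * h i
            * (starRingEnd ℂ) (h j)))
      = (∑ j, ∑ i, ((1/2:ℂ) * ((1/2:ℂ) * ((B (e i) (e j):ℂ)
          + Complex.I * (B (e i) (Complex.I • e j) : ℂ))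
        - Complex.I * ((1/2:ℂ) * ((B (Complex.I • e i) (e j) : ℂ)
          + Complex.I * (B (Complex.I • e i) (Complex.I • e j) : ℂ)))) * h i
            * (starRingEnd ℂ) (h j))) := Finset.sum_comm
  rw [swap, exp, Finset.mul_sum, Complex.re_sum, Complex.re_sum, ← Finset.sum_add_distrib]
  refine Finset.sum_congr rfl fun j _ => ?_
  rw [Finset.mul_sum, Complex.re_sum, Complex.re_sum, ← Finset.sum_add_distrib]
  refine Finset.sum_congr rfl fun i _ => ?_
  rw [cquad]; ring

variable (ρ : EuclideanSpace ℂ (Fin n) → ℝ) (hρ : ContDiff ℝ 2 ρ)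

include hρ in
lemma ofReal_fderiv (z : EuclideanSpace ℂ (Fin n)) :
    fderiv ℝ (fun z' => (ρ z' : ℂ)) z = Complex.ofRealCLM.comp (fderiv ℝ ρ z) :=
  (Complex.ofRealCLM.hasFDerivAt.comp z ((hρ.differentiable two_ne_zero z).hasFDerivAt)).fderiv

include hρ in
lemma wirt_eq (j : Fin n) (z : EuclideanSpace ℂ (Fin n)) :
    wirt (fun z' => (ρ z' : ℂ)) j z =
      (1/2:ℂ) * ((fderiv ℝ ρ z (e j) : ℂ) - Complex.I * (fderiv ℝ ρ z (Complex.I • e j) : ℂ)) := by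
  rw [wirt, ofReal_fderiv ρ hρ]; simp [e]

include hρ in
lemma wirtBar_eq (j : Fin n) (z : EuclideanSpace ℂ (Fin n)) :
    wirtBar (fun z' => (ρ z' : ℂ)) j z =
      (1/2:ℂ) * ((fderiv ℝ ρ z (e j) : ℂ) + Complex.I * (fderiv ℝ ρ z (Complex.I • e j) : ℂ)) := by
  rw [wirtBar, ofReal_fderiv ρ hρ]; simp [e]

include hρ in
lemma wirt_wirt_eq (w : EuclideanSpace ℂ (Fin n)) (i j : Fin n) :
    wirt (wirt (fun z' => (ρ z' : ℂ)) j) i w =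
      (1/2:ℂ) * ((1/2:ℂ) * ((fderiv ℝ (fderiv ℝ ρ) w (e i) (e j) : ℂ)
          - Complex.I * (fderiv ℝ (fderiv ℝ ρ) w (e i) (Complex.I • e j) : ℂ))
        - Complex.I * ((1/2:ℂ) * ((fderiv ℝ (fderiv ℝ ρ) w (Complex.I • e i) (e j) : ℂ)
          - Complex.I * (fderiv ℝ (fderiv ℝ ρ) w (Complex.I • e i) (Complex.I • e j) : ℂ)))) := by
  set B := fderiv ℝ (fderiv ℝ ρ) w with hB
  have hfd : HasFDerivAt (fderiv ℝ ρ) B w :=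
    (((hρ.fderiv_right (m := 1) (by norm_num)).differentiable one_ne_zero) w).hasFDerivAt
  have h1 : HasFDerivAt (fun z => ((fderiv ℝ ρ z (e j) : ℝ) : ℂ))
      (Complex.ofRealCLM.comp ((ContinuousLinearMap.apply ℝ ℝ (e j)).comp B)) w :=
    Complex.ofRealCLM.hasFDerivAt.comp w
      (((ContinuousLinearMap.apply ℝ ℝ (e j)).hasFDerivAt).comp w hfd)
  have h2 : HasFDerivAt (fun z => ((fderiv ℝ ρ z (Complex.I • e j) : ℝ) : ℂ))
      (Complex.ofRealCLM.comp ((ContinuousLinearMap.apply ℝ ℝ (Complex.I • e j)).comp B)) w :=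
    Complex.ofRealCLM.hasFDerivAt.comp w
      (((ContinuousLinearMap.apply ℝ ℝ (Complex.I • e j)).hasFDerivAt).comp w hfd)
  have h3 : HasFDerivAt (wirt (fun z' => (ρ z' : ℂ)) j)
      ((1/2:ℂ) • ((Complex.ofRealCLM.comp ((ContinuousLinearMap.apply ℝ ℝ (e j)).comp B))
        - Complex.I • (Complex.ofRealCLM.comp
            ((ContinuousLinearMap.apply ℝ ℝ (Complex.I • e j)).comp B)))) w := by
    have := (h1.sub (h2.const_mul Complex.I)).const_mul (1/2:ℂ)
    refine HasFDerivAt.congr_of_eventuallyEq this ?_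
    filter_upwards with z
    rw [wirt_eq ρ hρ]; rfl
  rw [wirt, h3.fderiv]
  simp [e]

include hρ in
lemma wirt_wirtBar_eq (w : EuclideanSpace ℂ (Fin n)) (i j : Fin n) :
    wirt (wirtBar (fun z' => (ρ z' : ℂ)) j) i w =
      (1/2:ℂ) * ((1/2:ℂ) * ((fderiv ℝ (fderiv ℝ ρ) w (e i) (e j) : ℂ)
          + Complex.I * (fderiv ℝ (fderiv ℝ ρ) w (e i) (Complex.I • e j) : ℂ))
        - Complex.I * ((1/2:ℂ) * ((fderiv ℝ (fderiv ℝ ρ) w (Complex.I • e i) (e j) : ℂ)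
          + Complex.I * (fderiv ℝ (fderiv ℝ ρ) w (Complex.I • e i) (Complex.I • e j) : ℂ)))) := by
  set B := fderiv ℝ (fderiv ℝ ρ) w with hB
  have hfd : HasFDerivAt (fderiv ℝ ρ) B w :=
    (((hρ.fderiv_right (m := 1) (by norm_num)).differentiable one_ne_zero) w).hasFDerivAt
  have h1 : HasFDerivAt (fun z => ((fderiv ℝ ρ z (e j) : ℝ) : ℂ))
      (Complex.ofRealCLM.comp ((ContinuousLinearMap.apply ℝ ℝ (e j)).comp B)) w :=
    Complex.ofRealCLM.hasFDerivAt.comp w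
      (((ContinuousLinearMap.apply ℝ ℝ (e j)).hasFDerivAt).comp w hfd)
  have h2 : HasFDerivAt (fun z => ((fderiv ℝ ρ z (Complex.I • e j) : ℝ) : ℂ))
      (Complex.ofRealCLM.comp ((ContinuousLinearMap.apply ℝ ℝ (Complex.I • e j)).comp B)) w :=
    Complex.ofRealCLM.hasFDerivAt.comp w
      (((ContinuousLinearMap.apply ℝ ℝ (Complex.I • e j)).hasFDerivAt).comp w hfd)
  have h3 : HasFDerivAt (wirtBar (fun z' => (ρ z' : ℂ)) j)
      ((1/2:ℂ) • ((Complex.ofRealCLM.comp ((ContinuousLinearMap.apply ℝ ℝ (e j)).comp B))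
        + Complex.I • (Complex.ofRealCLM.comp
            ((ContinuousLinearMap.apply ℝ ℝ (Complex.I • e j)).comp B)))) w := by
    have := (h1.add (h2.const_mul Complex.I)).const_mul (1/2:ℂ)
    refine HasFDerivAt.congr_of_eventuallyEq this ?_
    filter_upwards with z
    rw [wirtBar_eq ρ hρ]; rfl
  rw [wirt, h3.fderiv]
  simp [e]
  ring

/-- Second-order Taylor expansion with little-o remainder. -/
theorem taylor2 {E : Type*} [NormedAddCommGroup E] [NormedSpace ℝ E]
    {f : E → ℝ} (hf : ContDiff ℝ 2 f) (w : E) :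
    (fun z => f z - f w - fderiv ℝ f w (z - w)
        - (1/2) * fderiv ℝ (fderiv ℝ f) w (z - w) (z - w)) =o[nhds w]
      fun z => ‖z - w‖ ^ 2 := by
  set f' := fderiv ℝ f with hf'
  set B := fderiv ℝ f' w with hBdef
  have hdiff : ∀ y, HasFDerivAt f (f' y) y := fun y => (hf.differentiable two_ne_zero y).hasFDerivAt
  have hB : HasFDerivAt f' B w :=
    (((hf.fderiv_right (m := 1) (by norm_num)).differentiable one_ne_zero) w).hasFDerivAt
  have hsymm : ∀ u v, B u v = B v u := second_derivative_symmetric hdiff hB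
  rw [Asymptotics.isLittleO_iff]
  intro ε hε
  have hlo := Asymptotics.isLittleO_iff.1 hB.isLittleO hε
  rcases Metric.eventually_nhds_iff.1 hlo with ⟨δ, δpos, hδ⟩
  filter_upwards [Metric.ball_mem_nhds w δpos] with z hz
  set g : E → ℝ := fun u => f u - f' w (u - w) - (1/2) * B (u - w) (u - w) with hg
  have hg' : ∀ u : E, HasFDerivAt g (f' u - f' w - B (u - w)) u := by
    intro u
    have d1 : HasFDerivAt (fun u : E => f' w (u - w)) (f' w) u := by
      simpa using ((f' w).hasFDerivAt (x := u)).sub_const (f' w w)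
    have d2 : HasFDerivAt (fun u : E => B (u - w)) B u :=
      B.hasFDerivAt.comp u ((hasFDerivAt_id u).sub_const w)
    have d3 : HasFDerivAt (fun u : E => B (u - w) (u - w))
        ((B (u - w)).comp (ContinuousLinearMap.id ℝ E) + B.flip (u - w)) u := by
      have := d2.clm_apply ((hasFDerivAt_id u).sub_const w)
      simpa using this
    have d4 : HasFDerivAt (fun u : E => (1/2 : ℝ) * B (u - w) (u - w))
        ((1/2 : ℝ) • ((B (u - w)).comp (ContinuousLinearMap.id ℝ E) + B.flip (u - w))) u :=
      d3.const_mul _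
    have := ((hdiff u).sub d1).sub d4
    refine this.congr_fderiv ?_
    ext v
    simp only [ContinuousLinearMap.sub_apply, ContinuousLinearMap.smul_apply,
      ContinuousLinearMap.add_apply, ContinuousLinearMap.coe_comp', Function.comp_apply,
      ContinuousLinearMap.coe_id', id_eq, ContinuousLinearMap.flip_apply, smul_eq_mul,
      hsymm v (u - w)]
    ring
  have hz' : ‖z - w‖ < δ := by rwa [Metric.mem_ball, dist_eq_norm] at hz
  have key : ∀ u ∈ Metric.closedBall w ‖z - w‖, ‖f' u - f' w - B (u - w)‖ ≤ ε * ‖z - w‖ := by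
    intro u hu
    rw [Metric.mem_closedBall, dist_eq_norm] at hu
    have hu' : dist u w < δ := by rw [dist_eq_norm]; exact lt_of_le_of_lt hu hz'
    calc ‖f' u - f' w - B (u - w)‖ ≤ ε * ‖u - w‖ := hδ hu'
      _ ≤ ε * ‖z - w‖ := by gcongr
  have hzball : z ∈ Metric.closedBall w ‖z - w‖ := by
    rw [Metric.mem_closedBall, dist_eq_norm]
  have hwball : w ∈ Metric.closedBall w ‖z - w‖ := by simp
  have bound := (convex_closedBall w ‖z - w‖).norm_image_sub_le_of_norm_hasFDerivWithin_le
    (fun u hu => (hg' u).hasFDerivWithinAt) key hwball hzball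
  have hgw : g w = f w := by simp [hg]
  have hb : ‖g z - g w‖ ≤ ε * ‖z - w‖ * ‖z - w‖ := bound
  have heq : f z - f w - f' w (z - w) - (1/2) * B (z - w) (z - w) = g z - g w := by
    rw [hgw]; simp only [hg]; ring
  calc ‖f z - f w - f' w (z - w) - (1/2) * B (z - w) (z - w)‖
      = ‖g z - g w‖ := by rw [heq]
    _ ≤ ε * ‖z - w‖ * ‖z - w‖ := hb
    _ = ε * ‖(fun z => ‖z - w‖ ^ 2) z‖ := by
        simp [pow_two]; ring

include hρ in
lemma key_eq (w z : EuclideanSpace ℂ (Fin n)) :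
    2 * (∑ j, (wirt (fun z' => (ρ z' : ℂ)) j w -
          (1 / 2 : ℂ) * ∑ i, wirt (wirt (fun z' => (ρ z' : ℂ)) j) i w * (w i - z i)) *
        (w j - z j)).re
      - (ρ w - ρ z +
          (∑ i, ∑ j, wirt (wirtBar (fun z' => (ρ z' : ℂ)) j) i w *
            (w i - z i) * (starRingEnd ℂ) (w j - z j)).re)
    = ρ z - ρ w - fderiv ℝ ρ w (z - w)
        - (1/2) * fderiv ℝ (fderiv ℝ ρ) w (z - w) (z - w) := by
  set B := fderiv ℝ (fderiv ℝ ρ) w with hBdef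
  set h : EuclideanSpace ℂ (Fin n) := w - z with hh
  have hp : ∀ i, w i - z i = h i := fun _ => rfl
  simp only [hp, wirt_eq ρ hρ, wirt_wirt_eq ρ hρ, wirt_wirtBar_eq ρ hρ, ← hBdef]
  have split : (∑ j, ((1/2:ℂ) * ((fderiv ℝ ρ w (e j) : ℂ)
          - Complex.I * (fderiv ℝ ρ w (Complex.I • e j) : ℂ))
        - (1/2:ℂ) * ∑ i, ((1/2:ℂ) * ((1/2:ℂ) * ((B (e i) (e j):ℂ)
            - Complex.I * (B (e i) (Complex.I • e j) : ℂ))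
          - Complex.I * ((1/2:ℂ) * ((B (Complex.I • e i) (e j) : ℂ)
            - Complex.I * (B (Complex.I • e i) (Complex.I • e j) : ℂ)))) * h i)) * h j)
      = (∑ j, (1/2:ℂ) * ((fderiv ℝ ρ w (e j) : ℂ)
          - Complex.I * (fderiv ℝ ρ w (Complex.I • e j) : ℂ)) * h j)
        - (1/2:ℂ) * ∑ j, ∑ i, ((1/2:ℂ) * ((1/2:ℂ) * ((B (e i) (e j):ℂ)
            - Complex.I * (B (e i) (Complex.I • e j) : ℂ))
          - Complex.I * ((1/2:ℂ) * ((B (Complex.I • e i) (e j) : ℂ)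
            - Complex.I * (B (Complex.I • e i) (Complex.I • e j) : ℂ)))) * h i * h j) := by
    rw [Finset.mul_sum, ← Finset.sum_sub_distrib]
    refine Finset.sum_congr rfl fun j _ => ?_
    simp only [sub_mul, mul_assoc, Finset.sum_mul]
  rw [split]
  rw [Complex.sub_re]
  have half_re : ∀ X : ℂ, ((1/2:ℂ) * X).re = (1/2) * X.re := fun X => by
    rw [show (1/2:ℂ) = ((1/2:ℝ):ℂ) by norm_num, Complex.re_ofReal_mul]
  rw [half_re]
  have L := lin_id (fderiv ℝ ρ w) h
  have Q := quad_id B h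
  have hneg : h = -(z - w) := by rw [hh]; abel
  have hfd_neg : fderiv ℝ ρ w h = -(fderiv ℝ ρ w (z - w)) := by rw [hneg, map_neg]
  have hB_neg : B h h = B (z - w) (z - w) := by rw [hneg, map_neg]; simp
  rw [hfd_neg] at L
  rw [hB_neg] at Q
  linarith [L, Q]

end Stmt15Aux

open Stmt15Aux in
theorem stmt15 {n : ℕ} (ρ : EuclideanSpace ℂ (Fin n) → ℝ) (hρ : ContDiff ℝ 2 ρ)
    (w : EuclideanSpace ℂ (Fin n)) (c : ℝ) (hc : 0 < c)
    (hHess : ∀ v : EuclideanSpace ℂ (Fin n),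
      c * ‖v‖ ^ 2 ≤ (∑ i, ∑ j,
        wirt (wirtBar (fun z => (ρ z : ℂ)) j) i w * v i * (starRingEnd ℂ) (v j)).re) :
    -- second-order Taylor expansion:
    -- 2 Re⟨η(w,z), w - z⟩ = ρ(w) - ρ(z) + Σᵢⱼ ∂²ρ/∂ζᵢ∂ζ̄ⱼ(w)(wᵢ-zᵢ)(w̄ⱼ-z̄ⱼ) + o(|w-z|²)
    ((fun z : EuclideanSpace ℂ (Fin n) =>
        2 * (∑ j, (wirt (fun z' => (ρ z' : ℂ)) j w -
              (1 / 2 : ℂ) * ∑ i, wirt (wirt (fun z' => (ρ z' : ℂ)) j) i w * (w i - z i)) *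
            (w j - z j)).re
          - (ρ w - ρ z +
              (∑ i, ∑ j, wirt (wirtBar (fun z' => (ρ z' : ℂ)) j) i w *
                (w i - z i) * (starRingEnd ℂ) (w j - z j)).re))
      =o[nhds w] fun z => ‖w - z‖ ^ 2) ∧
    -- consequence: the lower bound near w
    (ρ w = 0 → ∃ r > (0 : ℝ), ∀ z : EuclideanSpace ℂ (Fin n), ‖w - z‖ < r → ρ z ≤ 0 →
      (c / 4) * ‖w - z‖ ^ 2 ≤
        (∑ j, (wirt (fun z' => (ρ z' : ℂ)) j w -
            (1 / 2 : ℂ) * ∑ i, wirt (wirt (fun z' => (ρ z' : ℂ)) j) i w * (w i - z i)) *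
          (w j - z j)).re) := by
  have hTaylor : ((fun z : EuclideanSpace ℂ (Fin n) =>
        2 * (∑ j, (wirt (fun z' => (ρ z' : ℂ)) j w -
              (1 / 2 : ℂ) * ∑ i, wirt (wirt (fun z' => (ρ z' : ℂ)) j) i w * (w i - z i)) *
            (w j - z j)).re
          - (ρ w - ρ z +
              (∑ i, ∑ j, wirt (wirtBar (fun z' => (ρ z' : ℂ)) j) i w *
                (w i - z i) * (starRingEnd ℂ) (w j - z j)).re))
      =o[nhds w] fun z => ‖w - z‖ ^ 2) := by
    refine (taylor2 hρ w).congr (fun z => (key_eq ρ hρ w z).symm) (fun z => by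
      rw [norm_sub_rev])
  refine ⟨hTaylor, fun hw => ?_⟩
  have hev := Asymptotics.isLittleO_iff.1 hTaylor (show (0:ℝ) < c/2 by linarith)
  rcases Metric.eventually_nhds_iff.1 hev with ⟨r, rpos, hr⟩
  refine ⟨r, rpos, fun z hz hρz => ?_⟩
  have hb := hr (show dist z w < r by rw [dist_eq_norm, ← norm_sub_rev]; exact hz)
  rw [Real.norm_eq_abs, Real.norm_eq_abs, _root_.abs_of_nonneg (by positivity : (0:ℝ) ≤ ‖w - z‖^2)]
    at hb
  have hH := hHess (w - z)
  have hpc : ∀ i, (w - z) i = w i - z i := fun _ => rfl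
  simp only [hpc] at hH
  have habs := abs_le.1 hb
  linarith [habs.1, habs.2, hH, hρz]
end
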